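/- For every word w over Δ and every index i ∈ {1,…,n}, the image φ(Q,w) intersects Q_i nontrivially (φ(Q,w) ∩ Q_i ≠ ∅) if and only if w contains no occurrence of the letters y and z, i.e. w ∈ (Σ∪{x})*. -/

import Mathlib

/-- The transition function of a DFA extended to words (read left to right). -/
def deltaStar {Q A : Type} (δ : Q → A → Q) (q : Q) (w : List A) : Q :=
  w.foldl δ q

/-- `w` is a reset word for the DFA with transition function `δ`. -/
def IsReset {Q A : Type} (δ : Q → A → Q) (w : List A) : Prop :=
  ∀ q q' : Q, deltaStar δ q w = deltaStar δ q' w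

/-- The set of reset words of a DFA. -/
def Syn {Q A : Type} (δ : Q → A → Q) : Set (List A) :=
  {w | IsReset δ w}

/-- The alphabet Δ = Σ ∪ {x,y,z}: `Sum.inl a` is a letter of Σ, and
`Sum.inr 0`, `Sum.inr 1`, `Sum.inr 2` are the new letters x, y, z. -/
abbrev Alph (σ : Type) : Type := σ ⊕ Fin 3

def xL {σ : Type} : Alph σ := Sum.inr 0
def yL {σ : Type} : Alph σ := Sum.inr 1
def zL {σ : Type} : Alph σ := Sum.inr 2

/-- The state set Q of the DFA 𝒜: the disjoint union of the state sets `Qst i`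
of the DFAs `M i`, together with two new states: `Sum.inr false` is the sink `s`
and `Sum.inr true` is the state `h`. -/
abbrev StA {n : ℕ} (Qst : Fin n → Type) : Type := (Σ i, Qst i) ⊕ Bool

def sA {n : ℕ} {Qst : Fin n → Type} : StA Qst := Sum.inr false
def hA {n : ℕ} {Qst : Fin n → Type} : StA Qst := Sum.inr true

/-- The transition function φ of the DFA 𝒜. -/
def phi {n : ℕ} {σ : Type} {Qst : Fin n → Type}
    (δi : ∀ i, Qst i → σ → Qst i) (qinit : ∀ i, Qst i)
    (Fi : ∀ i, Set (Qst i)) [∀ i, DecidablePred (· ∈ Fi i)] :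
    StA Qst → Alph σ → StA Qst
  | Sum.inl ⟨i, q⟩, Sum.inl a => Sum.inl ⟨i, δi i q a⟩
  | Sum.inl ⟨i, q⟩, Sum.inr k =>
      if k = 0 then Sum.inl ⟨i, qinit i⟩          -- φ(q, x) = qᵢ
      else if k = 1 then sA                        -- φ(q, y) = s
      else if q ∈ Fi i then sA else hA             -- φ(q, z) = s on Fᵢ, h off Fᵢ
  | Sum.inr _, _ => sA                             -- φ(s,·) = φ(h,·) = s

/-- The language accepted by the DFA `M i = ⟨Qst i, σ, δi i, qinit i, Fi i⟩`. -/
def LM {n : ℕ} {σ : Type} {Qst : Fin n → Type}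
    (δi : ∀ i, Qst i → σ → Qst i) (qinit : ∀ i, Qst i)
    (Fi : ∀ i, Set (Qst i)) (i : Fin n) : Set (List σ) :=
  {w | deltaStar (δi i) (qinit i) w ∈ Fi i}

/-- `w ∈ (Σ ∪ {x})*`, i.e. `w` contains no occurrence of the letters y and z. -/
def noYZ {σ : Type} (w : List (Alph σ)) : Prop := yL ∉ w ∧ zL ∉ w

/-- L₁ = (Σ∪{x})* y Δ* -/
def L1 {σ : Type} : Set (List (Alph σ)) :=
  {w | ∃ u v, noYZ u ∧ w = u ++ yL :: v}

/-- L₂ = (Σ∪{x})* z Δ⁺ -/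
def L2 {σ : Type} : Set (List (Alph σ)) :=
  {w | ∃ u v, noYZ u ∧ v ≠ [] ∧ w = u ++ zL :: v}

/-- The ideal language I = L₁ ∪ L₂. -/
def ISet {σ : Type} : Set (List (Alph σ)) := L1 ∪ L2


lemma stay_inr {n : ℕ} {σ : Type} {Qst : Fin n → Type}
    (δi : ∀ i, Qst i → σ → Qst i) (qinit : ∀ i, Qst i)
    (Fi : ∀ i, Set (Qst i)) [∀ i, DecidablePred (· ∈ Fi i)]
    (w : List (Alph σ)) (b : Bool) :
    ∃ b', deltaStar (phi δi qinit Fi) (Sum.inr b) w = Sum.inr b' := by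
  induction w generalizing b with
  | nil => exact ⟨b, rfl⟩
  | cons a w ih =>
    have : deltaStar (phi δi qinit Fi) (Sum.inr b) (a :: w)
        = deltaStar (phi δi qinit Fi) (phi δi qinit Fi (Sum.inr b) a) w := rfl
    rw [this]
    exact ih false

lemma stay_inl {n : ℕ} {σ : Type} {Qst : Fin n → Type}
    (δi : ∀ i, Qst i → σ → Qst i) (qinit : ∀ i, Qst i)
    (Fi : ∀ i, Set (Qst i)) [∀ i, DecidablePred (· ∈ Fi i)]
    (w : List (Alph σ)) (hw : noYZ w) (i : Fin n) (p : Qst i) :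
    ∃ p', deltaStar (phi δi qinit Fi) (Sum.inl ⟨i, p⟩) w = Sum.inl ⟨i, p'⟩ := by
  induction w generalizing p with
  | nil => exact ⟨p, rfl⟩
  | cons a w ih =>
    obtain ⟨hy, hz⟩ := hw
    have hw' : noYZ w := ⟨fun h => hy (List.mem_cons_of_mem _ h),
      fun h => hz (List.mem_cons_of_mem _ h)⟩
    have hay : a ≠ yL := fun h => hy (h ▸ List.mem_cons_self)
    have haz : a ≠ zL := fun h => hz (h ▸ List.mem_cons_self)
    match a with
    | Sum.inl s =>
      exact ih hw' (δi i p s)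
    | Sum.inr k =>
      have hk : k = 0 := by
        fin_cases k
        · rfl
        · exact absurd rfl hay
        · exact absurd rfl haz
      subst hk
      have : deltaStar (phi δi qinit Fi) (Sum.inl ⟨i, p⟩) (Sum.inr 0 :: w)
          = deltaStar (phi δi qinit Fi) (Sum.inl ⟨i, qinit i⟩) w := rfl
      rw [this]
      exact ih hw' (qinit i)

lemma kill_yz {n : ℕ} {σ : Type} {Qst : Fin n → Type}
    (δi : ∀ i, Qst i → σ → Qst i) (qinit : ∀ i, Qst i)
    (Fi : ∀ i, Set (Qst i)) [∀ i, DecidablePred (· ∈ Fi i)]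
    (w : List (Alph σ)) (hw : ¬ noYZ w) (q : StA Qst) :
    ∃ b, deltaStar (phi δi qinit Fi) q w = Sum.inr b := by
  induction w generalizing q with
  | nil => exact absurd ⟨List.not_mem_nil, List.not_mem_nil⟩ hw
  | cons a w ih =>
    have hstep : deltaStar (phi δi qinit Fi) q (a :: w)
        = deltaStar (phi δi qinit Fi) (phi δi qinit Fi q a) w := rfl
    by_cases hw' : noYZ w
    · -- then a = yL or zL
      have ha : a = yL ∨ a = zL := by
        by_contra hc
        push_neg at hc
        exact hw ⟨fun h => by
            rcases List.mem_cons.mp h with h | h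
            exacts [hc.1 h.symm, hw'.1 h],
          fun h => by
            rcases List.mem_cons.mp h with h | h
            exacts [hc.2 h.symm, hw'.2 h]⟩
      have : ∃ b, phi δi qinit Fi q a = Sum.inr b := by
        rcases ha with rfl | rfl
        · match q with
          | Sum.inl ⟨j, p⟩ => exact ⟨false, rfl⟩
          | Sum.inr b => exact ⟨false, rfl⟩
        · match q with
          | Sum.inl ⟨j, p⟩ =>
            show ∃ b, (if p ∈ Fi j then (sA : StA Qst) else hA) = Sum.inr b
            split_ifs <;> exact ⟨_, rfl⟩
          | Sum.inr b => exact ⟨false, rfl⟩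
      obtain ⟨b, hb⟩ := this
      rw [hstep, hb]
      exact stay_inr δi qinit Fi w b
    · rw [hstep]
      exact ih hw' _

/-- For every word w over Δ and every i, φ(Q,w) ∩ Qᵢ ≠ ∅ iff w ∈ (Σ∪{x})*. -/
theorem image_meets_Qi_iff_noYZ
    (n : ℕ) (hn : 0 < n) (σ : Type) [Fintype σ]
    (Qst : Fin n → Type) [∀ i, Fintype (Qst i)]
    (δi : ∀ i, Qst i → σ → Qst i) (qinit : ∀ i, Qst i)
    (Fi : ∀ i, Set (Qst i)) [∀ i, DecidablePred (· ∈ Fi i)]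
    (hno : ∀ i (q : Qst i) (a : σ), δi i q a ≠ qinit i)
    (hqF : ∀ i, qinit i ∉ Fi i)
    (w : List (Alph σ)) (i : Fin n) :
    (∃ (q : StA Qst) (p : Qst i),
        deltaStar (phi δi qinit Fi) q w = Sum.inl ⟨i, p⟩) ↔ noYZ w := by
  constructor
  · rintro ⟨q, p, hq⟩
    by_contra hw
    obtain ⟨b, hb⟩ := kill_yz δi qinit Fi w hw q
    rw [hq] at hb
    exact Sum.inl_ne_inr hb
  · intro hw
    obtain ⟨p', hp'⟩ := stay_inl δi qinit Fi w hw i (qinit i)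
    exact ⟨Sum.inl ⟨i, qinit i⟩, p', hp'⟩
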